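/- arXiv:1703.00988 — 2 statements merged into one kernel-verified Lean document; each statement's English description precedes it below -/
import Mathlib

section
/- If A is an elementary abelian group of order q^2 (q prime, q coprime to |G|) acting on a finite group G, then G is generated by the centralizers C_G(a) as a ranges over the nonidentity elements of A. -/
/-- The subgroup of elements of `G` fixed by every automorphism `φ a`, `a ∈ S`. -/
def fixedSubgroup {A G : Type*} [Group G] (φ : A → MulAut G) (S : Set A) : Subgroup G where
  carrier := {g | ∀ a ∈ S, φ a g = g}
  one_mem' := by intro a _; simp
  mul_mem' := by intro x y hx hy a ha; rw [map_mul, hx a ha, hy a ha]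
  inv_mem' := by intro x hx a ha; rw [map_inv, hx a ha]

namespace Stmt2Aux

variable {q : ℕ} {A : Type*} [CommGroup A] [Finite A]

/-- `C_G(a)` as `fixedSubgroup`. -/
def cg {G : Type*} [Group G] (φ : A →* MulAut G) (a : A) : Subgroup G :=
  fixedSubgroup (fun _ : Unit => φ a) Set.univ

lemma mem_cg {G : Type*} [Group G] {φ : A →* MulAut G} {a : A} {g : G} :
    g ∈ cg φ a ↔ φ a g = g :=
  ⟨fun h => h () trivial, fun h u _ => h⟩

lemma cg_le {G : Type*} [Group G] (φ : A →* MulAut G) {a : A} (ha : a ≠ 1) :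
    cg φ a ≤ ⨆ (a : A) (_ : a ≠ 1), cg φ a :=
  le_iSup_of_le a (le_iSup_of_le ha le_rfl)

lemma exists_ne_one_of_one_lt_card {B : Subgroup A} (h : 1 < Nat.card B) :
    ∃ b ∈ B, b ≠ 1 := by
  by_contra hc
  push_neg at hc
  have : B = ⊥ := by
    ext x; simp only [Subgroup.mem_bot]
    exact ⟨fun hx => hc x hx, fun hx => hx ▸ B.one_mem⟩
  rw [this, Subgroup.card_bot] at h
  omega

lemma abelian_case (hq : q.Prime) (hcard : Nat.card A = q ^ 2) (hexp : ∀ a : A, a ^ q = 1)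
    {V : Type*} [CommGroup V] [Finite V] (φ : A →* MulAut V)
    (hcop : Nat.Coprime q (Nat.card V)) :
    (⨆ (a : A) (_ : a ≠ 1), cg φ a) = ⊤ := by
  classical
  have _inst := Fintype.ofFinite A
  have _inst2 := Fintype.ofFinite (Subgroup A)
  rw [eq_top_iff]
  intro v _
  set H := ⨆ (a : A) (_ : a ≠ 1), cg φ a with hH
  set f : A → V := fun a => φ a v with hf
  have hf1 : f 1 = v := by simp [hf]
  -- order-q subgroups
  set S : Finset (Subgroup A) := Finset.univ.filter (fun B => Nat.card B = q) with hS
  set tB : Subgroup A → Finset A := fun B => (B : Set A).toFinset with htB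
  have hmem_tB : ∀ {B : Subgroup A} {x : A}, x ∈ tB B ↔ x ∈ B := by
    intro B x; simp [htB]
  have hcard_tB : ∀ B : Subgroup A, (tB B).card = Nat.card B := by
    intro B
    rw [htB]
    simp only [Set.toFinset_card, Nat.card_eq_fintype_card]
    rfl
  -- every nonidentity element lies in a unique member of S
  have hzp : ∀ x : A, x ≠ 1 → Subgroup.zpowers x ∈ S ∧ x ∈ Subgroup.zpowers x := by
    intro x hx
    refine ⟨Finset.mem_filter.mpr ⟨Finset.mem_univ _, ?_⟩, Subgroup.mem_zpowers x⟩
    rw [Nat.card_zpowers]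
    have h1 : orderOf x ∣ q := orderOf_dvd_of_pow_eq_one (hexp x)
    rcases (Nat.Prime.eq_one_or_self_of_dvd hq _ h1) with h | h
    · exact absurd (orderOf_eq_one_iff.mp h) hx
    · exact h
  have huniq : ∀ {B : Subgroup A}, B ∈ S → ∀ {x : A}, x ∈ B → x ≠ 1 →
      B = Subgroup.zpowers x := by
    intro B hB x hxB hx
    have hle : Subgroup.zpowers x ≤ B := Subgroup.zpowers_le.mpr hxB
    have hc1 : Nat.card B = q := (Finset.mem_filter.mp hB).2
    have hc2 : Nat.card (Subgroup.zpowers x) = q := by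
      have := (hzp x hx).1
      exact (Finset.mem_filter.mp this).2
    have hsub : tB (Subgroup.zpowers x) ⊆ tB B := by
      intro y hy; exact hmem_tB.mpr (hle (hmem_tB.mp hy))
    have hcards : (tB B).card ≤ (tB (Subgroup.zpowers x)).card := by
      rw [hcard_tB, hcard_tB, hc1, hc2]
    have := Finset.eq_of_subset_of_card_le hsub hcards
    ext y
    constructor
    · intro hy; exact hmem_tB.mp (this ▸ hmem_tB.mpr hy)
    · intro hy; exact hle hy
  -- norm maps
  set NB : Subgroup A → V := fun B => ∏ x ∈ tB B, f x with hNB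
  set NA : V := ∏ x ∈ Finset.univ, f x with hNAdef
  have happ : ∀ (b x : A), φ b (f x) = f (b * x) := by
    intro b x
    rw [hf]
    simp only [map_mul, MulAut.mul_apply]
  have hfix : ∀ (s : Finset A) (b : A), (∀ x ∈ s, b * x ∈ s) → (∀ x ∈ s, b⁻¹ * x ∈ s) →
      φ b (∏ x ∈ s, f x) = ∏ x ∈ s, f x := by
    intro s b h1 h2
    rw [map_prod]
    refine Finset.prod_nbij' (i := fun x => b * x) (j := fun x => b⁻¹ * x) h1 h2 ?_ ?_ ?_
    · intro x hx; simp
    · intro x hx; simp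
    · intro x hx; exact happ b x
  have hNBfix : ∀ B : Subgroup A, ∀ b ∈ B, φ b (NB B) = NB B := by
    intro B b hb
    refine hfix _ b ?_ ?_
    · intro x hx; exact hmem_tB.mpr (B.mul_mem hb (hmem_tB.mp hx))
    · intro x hx; exact hmem_tB.mpr (B.mul_mem (B.inv_mem hb) (hmem_tB.mp hx))
  have hNAfix : ∀ b : A, φ b NA = NA := by
    intro b
    refine hfix _ b ?_ ?_ <;> intro x _ <;> exact Finset.mem_univ _
  have hNBH : ∀ B ∈ S, NB B ∈ H := by
    intro B hB
    have hcB : Nat.card B = q := (Finset.mem_filter.mp hB).2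
    obtain ⟨b₀, hb₀B, hb₀⟩ := exists_ne_one_of_one_lt_card (by rw [hcB]; exact hq.one_lt)
    exact cg_le φ hb₀ (mem_cg.mpr (hNBfix B b₀ hb₀B))
  have hntA : Nontrivial A := by
    rw [← Finite.one_lt_card_iff_nontrivial, hcard]
    have := hq.one_lt
    nlinarith
  obtain ⟨a₀, ha₀⟩ := exists_ne (1 : A)
  have hNAH : NA ∈ H := cg_le φ ha₀ (mem_cg.mpr (hNAfix a₀))
  -- partition of A^# by the subgroups in S
  have hdisj : ∀ B ∈ S, ∀ B' ∈ S, B ≠ B' →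
      Disjoint (tB B \ {1}) (tB B' \ {1}) := by
    intro B hB B' hB' hne
    rw [Finset.disjoint_left]
    intro x hx hx'
    obtain ⟨hxB, hx1⟩ := Finset.mem_sdiff.mp hx
    obtain ⟨hxB', _⟩ := Finset.mem_sdiff.mp hx'
    have hx1' : x ≠ 1 := by simpa using hx1
    exact hne ((huniq hB (hmem_tB.mp hxB) hx1').trans
      (huniq hB' (hmem_tB.mp hxB') hx1').symm)
  have hbiU : S.biUnion (fun B => tB B \ {1}) = Finset.univ \ {1} := by
    ext x
    simp only [Finset.mem_biUnion, Finset.mem_sdiff, Finset.mem_univ, true_and,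
      Finset.mem_singleton]
    constructor
    · rintro ⟨B, _, hx, hx1⟩
      simpa using hx1
    · intro hx1
      exact ⟨Subgroup.zpowers x, (hzp x hx1).1, hmem_tB.mpr (hzp x hx1).2, by simpa using hx1⟩
  have hScard : S.card = q + 1 := by
    have hcount : (Finset.univ \ ({1} : Finset A)).card = S.card * (q - 1) := by
      rw [← hbiU, Finset.card_biUnion hdisj]
      rw [Finset.sum_congr rfl (fun B hB => ?_)]
      · rw [Finset.sum_const, smul_eq_mul]
      · have h1B : (1 : A) ∈ tB B := hmem_tB.mpr B.one_mem
        rw [Finset.card_sdiff_of_subset (by simpa using h1B), hcard_tB, (Finset.mem_filter.mp hB).2]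
        simp
    have huc : (Finset.univ \ ({1} : Finset A)).card = q ^ 2 - 1 := by
      rw [Finset.card_sdiff_of_subset (by simp), Finset.card_univ, Finset.card_singleton,
        ← Nat.card_eq_fintype_card, hcard]
    have h2 : S.card * (q - 1) = (q + 1) * (q - 1) := by
      have h1q := hq.one_le
      have h1q2 : 1 ≤ q ^ 2 := Nat.one_le_pow _ _ (by omega)
      rw [← hcount, huc]
      zify [h1q, h1q2]
      ring
    have hqpos : 0 < q - 1 := by have := hq.one_lt; omega
    exact Nat.eq_of_mul_eq_mul_right hqpos h2
  -- the product identity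
  have hsplit : ∀ B ∈ S, NB B = v * ∏ x ∈ tB B \ {1}, f x := by
    intro B hB
    have h1B : (1 : A) ∈ tB B := hmem_tB.mpr B.one_mem
    show ∏ x ∈ tB B, f x = v * ∏ x ∈ tB B \ {1}, f x
    rw [Finset.prod_eq_mul_prod_sdiff_singleton_of_mem h1B f, hf1]
  have hprod1 : ∏ B ∈ S, NB B = v ^ S.card * ∏ x ∈ Finset.univ \ {1}, f x := by
    rw [Finset.prod_congr rfl hsplit, Finset.prod_mul_distrib, Finset.prod_const,
      ← hbiU, Finset.prod_biUnion hdisj]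
  have hprod2 : NA = v * ∏ x ∈ Finset.univ \ {1}, f x := by
    rw [hNAdef, Finset.prod_eq_mul_prod_sdiff_singleton_of_mem (Finset.mem_univ 1) f, hf1]
  have hkey : v ^ q = (∏ B ∈ S, NB B) * NA⁻¹ := by
    rw [hprod1, hprod2, hScard]
    group
  have hvq : v ^ q ∈ H := by
    rw [hkey]
    exact H.mul_mem (Subgroup.prod_mem H hNBH) (H.inv_mem hNAH)
  -- conclude using coprimality
  have hordv : Nat.Coprime q (orderOf v) :=
    Nat.Coprime.coprime_dvd_right (orderOf_dvd_natCard v) hcop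
  by_cases hord1 : orderOf v = 1
  · have : v = 1 := orderOf_eq_one_iff.mp hord1
    rw [this]; exact H.one_mem
  · have hpos : 0 < orderOf v := by
      have : Finite V := inferInstance
      exact orderOf_pos v
    have hord2 : 1 < orderOf v := by omega
    obtain ⟨k, -, hk⟩ := Nat.exists_mul_mod_eq_one_of_coprime hordv hord2
    have hmod : q * k ≡ 1 [MOD orderOf v] := by
      unfold Nat.ModEq
      rw [hk, Nat.one_mod_eq_one.mpr (by omega)]
    have : v ^ (q * k) = v ^ 1 := pow_eq_pow_iff_modEq.mpr hmod
    rw [pow_one] at this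
    rw [← this, pow_mul]
    exact H.pow_mem hvq k

section Restrict

variable {G : Type*} [Group G]

/-- Restriction of the action to an invariant subgroup. -/
def restrictAut (φ : A →* MulAut G) (P : Subgroup G)
    (hP : ∀ a : A, ∀ g ∈ P, φ a g ∈ P) : A →* MulAut ↥P where
  toFun a :=
    { toFun := fun g => ⟨φ a g, hP a g g.2⟩
      invFun := fun g => ⟨φ a⁻¹ g, hP a⁻¹ g g.2⟩
      left_inv := by intro g; ext; simp
      right_inv := by intro g; ext; simp
      map_mul' := by intro g h; ext; simp }
  map_one' := by ext g; simp
  map_mul' := by intro a b; ext g; simp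

@[simp] lemma restrictAut_apply (φ : A →* MulAut G) (P : Subgroup G)
    (hP : ∀ a : A, ∀ g ∈ P, φ a g ∈ P) (a : A) (g : ↥P) :
    ((restrictAut φ P hP a) g : G) = φ a ↑g := rfl

lemma le_of_restrict (φ : A →* MulAut G) (P : Subgroup G)
    (hP : ∀ a : A, ∀ g ∈ P, φ a g ∈ P)
    (h : (⨆ (a : A) (_ : a ≠ 1), cg (restrictAut φ P hP) a) = ⊤) :
    P ≤ ⨆ (a : A) (_ : a ≠ 1), cg φ a := by
  have h1 : P = Subgroup.map P.subtype (⨆ (a : A) (_ : a ≠ 1), cg (restrictAut φ P hP) a) := by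
    rw [h, ← MonoidHom.range_eq_map]
    exact (Subgroup.range_subtype P).symm
  rw [h1, Subgroup.map_iSup]
  refine iSup_mono fun a => ?_
  rw [Subgroup.map_iSup]
  refine iSup_mono fun ha => ?_
  rintro x ⟨y, hy, rfl⟩
  exact mem_cg.mpr (congrArg Subtype.val (mem_cg.mp hy))

lemma map_eq_of_invariant (φ : A →* MulAut G) (N : Subgroup G)
    (hP : ∀ a : A, ∀ g ∈ N, φ a g ∈ N) (a : A) :
    N.map (φ a : G ≃* G).toMonoidHom = N := by
  apply le_antisymm
  · rintro x ⟨g, hg, rfl⟩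
    exact hP a g hg
  · intro g hg
    refine ⟨φ a⁻¹ g, hP a⁻¹ g hg, ?_⟩
    simp [map_inv]

end Restrict

section Quot

variable {G : Type*} [Group G]

/-- Induced action on the quotient by an invariant normal subgroup. -/
def quotAut (φ : A →* MulAut G) (N : Subgroup G) [N.Normal]
    (hN : ∀ a : A, N.map (φ a : G ≃* G).toMonoidHom = N) : A →* MulAut (G ⧸ N) where
  toFun a := QuotientGroup.congr N N (φ a) (hN a)
  map_one' := by
    ext x
    induction x using QuotientGroup.induction_on with
    | H g => simp [QuotientGroup.congr_mk]
  map_mul' := by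
    intro a b
    ext x
    induction x using QuotientGroup.induction_on with
    | H g => simp [QuotientGroup.congr_mk, MulAut.mul_apply]; rfl

@[simp] lemma quotAut_mk (φ : A →* MulAut G) (N : Subgroup G) [N.Normal]
    (hN : ∀ a : A, N.map (φ a : G ≃* G).toMonoidHom = N) (a : A) (g : G) :
    quotAut φ N hN a (g : G ⧸ N) = ((φ a g : G) : G ⧸ N) :=
  QuotientGroup.congr_mk N N (φ a) (hN a) g

@[simp] lemma quotAut_mk' (φ : A →* MulAut G) (N : Subgroup G) [N.Normal]
    (hN : ∀ a : A, N.map (φ a : G ≃* G).toMonoidHom = N) (a : A) (g : G) :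
    quotAut φ N hN a (QuotientGroup.mk g) = ((φ a g : G) : G ⧸ N) :=
  QuotientGroup.congr_mk N N (φ a) (hN a) g

lemma lift_fixed [Finite G] (hq : q.Prime) (hexp : ∀ a : A, a ^ q = 1)
    (φ : A →* MulAut G) (N : Subgroup G) [N.Normal]
    (hN : ∀ a : A, N.map (φ a : G ≃* G).toMonoidHom = N)
    (hcop : Nat.Coprime q (Nat.card G))
    {a : A} (ha : a ≠ 1) {x : G ⧸ N} (hx : quotAut φ N hN a x = x) :
    ∃ g : G, φ a g = g ∧ (g : G ⧸ N) = x := by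
  classical
  haveI := Fact.mk hq
  have horda : orderOf a = q := by
    have h1 : orderOf a ∣ q := orderOf_dvd_of_pow_eq_one (hexp a)
    rcases hq.eq_one_or_self_of_dvd _ h1 with h | h
    · exact absurd (orderOf_eq_one_iff.mp h) ha
    · exact h
  set Q : Subgroup A := Subgroup.zpowers a with hQ
  have hpg : IsPGroup q ↥Q := by
    apply IsPGroup.of_card (n := 1)
    rw [Nat.card_zpowers, horda, pow_one]
  -- every element of Q fixes x
  have hfixall : ∀ b ∈ Q, quotAut φ N hN b x = x := by
    have hst : quotAut φ N hN a ∈ MulAction.stabilizer (MulAut (G ⧸ N)) x := by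
      rw [MulAction.mem_stabilizer_iff]
      exact hx
    intro b hb
    obtain ⟨k, rfl⟩ := Subgroup.mem_zpowers_iff.mp hb
    have h2 := (MulAction.stabilizer (MulAut (G ⧸ N)) x).zpow_mem hst k
    rw [MulAction.mem_stabilizer_iff] at h2
    rw [map_zpow]
    exact h2
  -- the fiber over x
  set T := {g : G // (g : G ⧸ N) = x} with hT
  letI : SMul ↥Q T :=
    ⟨fun b t => ⟨φ ↑b ↑t, by
      have h1 := quotAut_mk' φ N hN (↑b : A) (↑t : G)
      show ((φ ↑b (↑t : G) : G) : G ⧸ N) = x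
      rw [← h1, t.2, hfixall ↑b b.2]⟩⟩
  have hsmul_def : ∀ (b : ↥Q) (t : T), ((b • t : T) : G) = φ ↑b ↑t := fun _ _ => rfl
  letI : MulAction ↥Q T :=
    { one_smul := fun t => Subtype.ext (by
        rw [hsmul_def]
        show (φ ((1 : ↥Q) : A)) _ = _
        simp
      )
      mul_smul := fun b c t => Subtype.ext (by
        rw [hsmul_def, hsmul_def, hsmul_def]
        show (φ ((b : A) * (c : A))) _ = _
        simp [MulAut.mul_apply]) }
  obtain ⟨g₀, hg₀⟩ := QuotientGroup.mk_surjective x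
  have hTcard : Nat.card T = Nat.card N := by
    apply Nat.card_congr
    refine ⟨fun t => ⟨g₀⁻¹ * ↑t, ?_⟩, fun n => ⟨g₀ * ↑n, ?_⟩, ?_, ?_⟩
    · refine (QuotientGroup.eq_one_iff _).mp ?_
      show ((g₀⁻¹ * _ : G) : G ⧸ N) = 1
      rw [QuotientGroup.mk_mul, QuotientGroup.mk_inv, hg₀, t.2]
      simp
    · show ((g₀ * _ : G) : G ⧸ N) = x
      rw [QuotientGroup.mk_mul, (QuotientGroup.eq_one_iff ((n : G))).mpr n.2, mul_one, hg₀]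
    · intro t
      apply Subtype.ext
      show g₀ * (g₀⁻¹ * ↑t) = ↑t
      group
    · intro n
      apply Subtype.ext
      show g₀⁻¹ * (g₀ * ↑n) = ↑n
      group
  have hmod := hpg.card_modEq_card_fixedPoints T
  have hcopN : Nat.Coprime q (Nat.card N) :=
    hcop.coprime_dvd_right (Subgroup.card_subgroup_dvd_card N)
  have hne : Nat.card (MulAction.fixedPoints ↥Q T) ≠ 0 := by
    intro h0
    rw [h0, hTcard] at hmod
    have hdvd : q ∣ Nat.card N := (Nat.modEq_zero_iff_dvd).mp hmod
    have h1 : q = 1 := Nat.Coprime.eq_one_of_dvd hcopN hdvd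
    exact hq.one_lt.ne' h1
  have hnonempty : Nonempty (MulAction.fixedPoints ↥Q T) := (Nat.card_ne_zero.mp hne).1
  obtain ⟨⟨t, ht⟩⟩ := hnonempty
  have hta := ht (⟨a, Subgroup.mem_zpowers a⟩ : ↥Q)
  have : φ a (↑t : G) = ↑t := by
    have := congrArg Subtype.val hta
    rw [hsmul_def] at this
    exact this
  exact ⟨↑t, this, t.2⟩

lemma quotient_step [Finite G] (hq : q.Prime) (hexp : ∀ a : A, a ^ q = 1)
    (φ : A →* MulAut G) (N : Subgroup G) [N.Normal]
    (hN : ∀ a : A, N.map (φ a : G ≃* G).toMonoidHom = N)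
    (hcop : Nat.Coprime q (Nat.card G))
    (hquot : (⨆ (a : A) (_ : a ≠ 1), cg (quotAut φ N hN) a) = ⊤)
    (hNle : N ≤ ⨆ (a : A) (_ : a ≠ 1), cg φ a) :
    (⨆ (a : A) (_ : a ≠ 1), cg φ a) = ⊤ := by
  set H := ⨆ (a : A) (_ : a ≠ 1), cg φ a with hH
  rw [eq_top_iff]
  intro g _
  have hg : (g : G ⧸ N) ∈ (⨆ (a : A) (_ : a ≠ 1), cg (quotAut φ N hN) a) := by
    rw [hquot]; trivial
  have hle : (⨆ (a : A) (_ : a ≠ 1), cg (quotAut φ N hN) a) ≤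
      Subgroup.map (QuotientGroup.mk' N) H := by
    refine iSup_le fun a => iSup_le fun ha => ?_
    intro x hx
    obtain ⟨g', hg', hmk⟩ := lift_fixed hq hexp φ N hN hcop ha (mem_cg.mp hx)
    exact ⟨g', hH ▸ cg_le φ ha (mem_cg.mpr hg'), hmk⟩
  obtain ⟨h, hh, hhg⟩ := hle hg
  have hmemN : h⁻¹ * g ∈ N := by
    have : ((h : G ⧸ N)) = (g : G ⧸ N) := hhg
    rwa [QuotientGroup.eq] at this
  have : g = h * (h⁻¹ * g) := by group
  rw [this]
  exact H.mul_mem hh (hNle hmemN)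

end Quot

section Sylow

open Pointwise

variable {G : Type*} [Group G] [Finite G]

lemma exists_invariant_sylow (hq : q.Prime) (hcardA : Nat.card A = q ^ 2)
    (φ : A →* MulAut G) (hcop : Nat.Coprime q (Nat.card G))
    (p : ℕ) [Fact p.Prime] :
    ∃ P : Sylow p G, ∀ a : A, ∀ g ∈ (P : Subgroup G), φ a g ∈ (P : Subgroup G) := by
  classical
  haveI := Fact.mk hq
  -- the semidirect product
  set Γ := SemidirectProduct G A φ with hΓ
  have eΓ : Γ ≃ G × A :=
    ⟨fun x => (x.left, x.right), fun x => ⟨x.1, x.2⟩, fun x => rfl, fun x => rfl⟩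
  haveI : Finite Γ := Finite.of_equiv _ eΓ.symm
  have hcardΓ : Nat.card Γ = Nat.card G * q ^ 2 := by
    rw [Nat.card_congr eΓ, Nat.card_prod, hcardA]
  have hcardGpos : Nat.card G ≠ 0 := Nat.card_pos.ne'
  have hqnot : ¬ q ∣ Nat.card G := (Nat.Prime.coprime_iff_not_dvd hq).mp hcop
  have hfactΓ : (Nat.card Γ).factorization q = 2 := by
    have hq2 : (q : ℕ) ^ 2 ≠ 0 := pow_ne_zero 2 hq.pos.ne'
    rw [hcardΓ, Nat.factorization_mul hcardGpos hq2]
    simp [Nat.factorization_eq_zero_of_not_dvd hqnot, hq.factorization_pow]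
  -- the normal copy of G
  set NN : Subgroup Γ := (SemidirectProduct.inl : G →* Γ).range with hNN
  haveI : NN.Normal := by
    rw [hNN, SemidirectProduct.range_inl_eq_ker_rightHom]
    exact MonoidHom.normal_ker _
  have hcardNN : Nat.card NN = Nat.card G := by
    rw [hNN]
    exact (Nat.card_congr (MonoidHom.ofInjective SemidirectProduct.inl_injective).toEquiv).symm
  -- a Sylow p-subgroup of NN and Frattini
  obtain ⟨P0⟩ : Nonempty (Sylow p ↥NN) := Sylow.nonempty
  set Pb : Subgroup Γ := Subgroup.map NN.subtype (P0 : Subgroup ↥NN) with hPb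
  set K : Subgroup Γ := Subgroup.normalizer (Pb : Set Γ) with hK
  have hfrat : K ⊔ NN = ⊤ := Sylow.normalizer_sup_eq_top P0
  have hPbNN : Pb ≤ NN := by
    rw [hPb]
    exact Subgroup.map_subtype_le _
  -- q ^ 2 divides the cardinality of K
  have hNNindex : NN.index = q ^ 2 := by
    have h1 := Subgroup.card_mul_index NN
    rw [hcardNN, hcardΓ] at h1
    exact Nat.eq_of_mul_eq_mul_left (Nat.pos_of_ne_zero hcardGpos) h1
  have hrel : NN.relIndex K = q ^ 2 := by
    rw [← Subgroup.relIndex_sup_right, hfrat, Subgroup.relIndex_top_right, hNNindex]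
  have hq2K : q ^ 2 ∣ Nat.card K := by
    rw [← hrel]
    exact ⟨Nat.card (NN.subgroupOf K), by
      rw [Nat.mul_comm]
      exact ((NN.subgroupOf K).card_mul_index).symm⟩
  -- a Sylow q-subgroup of K is Sylow in Γ
  obtain ⟨Q0⟩ : Nonempty (Sylow q ↥K) := Sylow.nonempty
  set Q' : Subgroup Γ := Subgroup.map K.subtype (Q0 : Subgroup ↥K) with hQ'
  have hQ'K : Q' ≤ K := by
    rw [hQ']
    exact Subgroup.map_subtype_le _
  have hcardQ' : Nat.card Q' = q ^ 2 := by
    have h1 : Nat.card Q' = Nat.card Q0 :=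
      (Nat.card_congr (Subgroup.equivMapOfInjective (Q0 : Subgroup ↥K) K.subtype
        (Subgroup.subtype_injective K)).toEquiv).symm
    have h2 : Nat.card Q0 = q ^ ((Nat.card ↥K).factorization q) := Q0.card_eq_multiplicity
    have hKpos : Nat.card ↥K ≠ 0 := Nat.card_pos.ne'
    have hge : 2 ≤ (Nat.card ↥K).factorization q :=
      (Nat.Prime.pow_dvd_iff_le_factorization hq hKpos).mp hq2K
    have hle : (Nat.card ↥K).factorization q ≤ 2 := by
      have hdvd : Nat.card ↥K ∣ Nat.card Γ := Subgroup.card_subgroup_dvd_card K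
      calc (Nat.card ↥K).factorization q ≤ (Nat.card Γ).factorization q :=
            (Nat.factorization_le_iff_dvd hKpos Nat.card_pos.ne').mpr hdvd q
        _ = 2 := hfactΓ
    rw [h1, h2, Nat.le_antisymm hle hge]
  -- the copy of A
  set Ab : Subgroup Γ := (SemidirectProduct.inr : A →* Γ).range with hAb
  have hcardAb : Nat.card Ab = q ^ 2 := by
    rw [hAb, (Nat.card_congr (MonoidHom.ofInjective
      SemidirectProduct.inr_injective).toEquiv).symm, hcardA]
  -- both are Sylow q-subgroups of Γ, hence conjugate
  have hcardeq : ∀ (H : Subgroup Γ), Nat.card H = q ^ 2 →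
      Nat.card H = q ^ (Nat.card Γ).factorization q := by
    intro H h; rw [h, hfactΓ]
  set SQ : Sylow q Γ := Sylow.ofCard Q' (hcardeq _ hcardQ') with hSQ
  set SA : Sylow q Γ := Sylow.ofCard Ab (hcardeq _ hcardAb) with hSA
  obtain ⟨x, hx⟩ := MulAction.exists_smul_eq Γ SQ SA
  have hxsub : MulAut.conj x • Q' = Ab := by
    have := congrArg (fun (P : Sylow q Γ) => (P : Subgroup Γ)) hx
    simpa [Sylow.coe_subgroup_smul, hSQ, hSA] using this
  -- the conjugated Sylow p-subgroup
  set P2 : Subgroup Γ := MulAut.conj x • Pb with hP2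
  have hsmul_eq : ∀ (e : MulAut Γ) (S : Subgroup Γ), e • S = S.map e.toMonoidHom :=
    fun _ _ => rfl
  have hAnorm : Ab ≤ Subgroup.normalizer (P2 : Set Γ) := by
    rw [← hxsub, hP2]
    have h1 : MulAut.conj x • Q' ≤ MulAut.conj x • K :=
      (Subgroup.pointwise_smul_le_pointwise_smul_iff).mpr hQ'K
    refine h1.trans ?_
    rw [hK, hsmul_eq, hsmul_eq, ← Subgroup.map_equiv_normalizer_eq Pb (MulAut.conj x)]
  have hP2NN : P2 ≤ NN := by
    rw [hP2]
    intro y hy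
    rw [Subgroup.mem_pointwise_smul_iff_inv_smul_mem] at hy
    have h1 : (MulAut.conj x)⁻¹ • y ∈ NN := hPbNN hy
    have h2 : y = x * ((MulAut.conj x)⁻¹ • y) * x⁻¹ := by
      simp [MulAut.smul_def]
      simp [mul_assoc]
      exact mul_inv_cancel x
    rw [h2]
    exact (‹NN.Normal›).conj_mem _ h1 x
  have hcardP2 : Nat.card P2 = p ^ ((Nat.card G).factorization p) := by
    have h1 : Nat.card P2 = Nat.card Pb := by
      rw [hP2, hsmul_eq]
      exact (Nat.card_congr (Subgroup.equivMapOfInjective Pb _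
        (MulEquiv.injective (MulAut.conj x))).toEquiv).symm
    have h2 : Nat.card Pb = Nat.card P0 := by
      rw [hPb]
      exact (Nat.card_congr (Subgroup.equivMapOfInjective (P0 : Subgroup ↥NN) NN.subtype
        (Subgroup.subtype_injective NN)).toEquiv).symm
    rw [h1, h2, P0.card_eq_multiplicity, hcardNN]
  -- pull back to G
  set P' : Subgroup G := P2.comap (SemidirectProduct.inl : G →* Γ) with hP'
  have hcardP' : Nat.card P' = p ^ ((Nat.card G).factorization p) := by
    rw [← hcardP2]
    apply Nat.card_congr
    refine Equiv.ofBijective (fun g => ⟨SemidirectProduct.inl ↑g, g.2⟩) ⟨?_, ?_⟩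
    · intro g h hgh
      exact Subtype.ext (SemidirectProduct.inl_injective (congrArg Subtype.val hgh))
    · rintro ⟨y, hy⟩
      obtain ⟨g, hg⟩ := hP2NN hy
      exact ⟨⟨g, by rw [hP', Subgroup.mem_comap, hg]; exact hy⟩, Subtype.ext hg⟩
  refine ⟨Sylow.ofCard P' hcardP', ?_⟩
  intro a g hg
  have hgP2 : SemidirectProduct.inl g ∈ P2 := hg
  have hnorm := hAnorm ⟨a, rfl⟩
  rw [Subgroup.mem_normalizer_iff] at hnorm
  have h2 : SemidirectProduct.inr a * SemidirectProduct.inl g *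
      (SemidirectProduct.inr a)⁻¹ ∈ P2 := (hnorm _).mp hgP2
  have h3 : SemidirectProduct.inl (φ a g) ∈ P2 := by
    rw [SemidirectProduct.inl_aut, map_inv]
    exact h2
  exact h3

end Sylow

theorem key (hq : q.Prime) (hcardA : Nat.card A = q ^ 2) (hexp : ∀ a : A, a ^ q = 1) :
    ∀ (n : ℕ) (G : Type*) [Group G] [Finite G], Nat.card G = n →
      ∀ (φ : A →* MulAut G), Nat.Coprime q (Nat.card G) →
      (⨆ (a : A) (_ : a ≠ 1), cg φ a) = ⊤ := by
  intro n
  induction n using Nat.strong_induction_on with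
  | _ n ih =>
  intro G _ _ hn φ hcop
  rcases subsingleton_or_nontrivial G with hs | hnt
  · rw [eq_top_iff]
    intro g _
    rw [Subsingleton.elim g 1]
    exact Subgroup.one_mem _
  by_cases hZtop : Subgroup.center G = ⊤
  · -- abelian case
    letI : CommGroup G :=
      { mul_comm := fun x y => by
          have hy : y ∈ Subgroup.center G := by rw [hZtop]; trivial
          exact Subgroup.mem_center_iff.mp hy x }
    exact abelian_case hq hcardA hexp φ hcop
  by_cases hZbot : Subgroup.center G = ⊥
  · -- trivial center : generated by invariant Sylow subgroups
    set H := ⨆ (a : A) (_ : a ≠ 1), cg φ a with hH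
    have hcardGne : Nat.card G ≠ 0 := Nat.card_pos.ne'
    have hcardHne : Nat.card H ≠ 0 := Nat.card_pos.ne'
    have hdvd : Nat.card G ∣ Nat.card H := by
      rw [← Nat.factorization_le_iff_dvd hcardGne hcardHne]
      intro p
      by_cases hp : p.Prime
      swap
      · simp [Nat.factorization_eq_zero_of_not_prime _ hp]
      haveI := Fact.mk hp
      by_cases hp0 : (Nat.card G).factorization p = 0
      · simp [hp0]
      obtain ⟨P, hPinv⟩ := exists_invariant_sylow hq hcardA φ hcop p
      have hPne : (P : Subgroup G) ≠ ⊤ := by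
        intro htop
        have hsur : Function.Surjective (P : Subgroup G).subtype := by
          intro g
          exact ⟨⟨g, htop ▸ Subgroup.mem_top g⟩, rfl⟩
        have hPG : IsPGroup p G := IsPGroup.of_surjective P.2 _ hsur
        have hcent : Nontrivial (Subgroup.center G) := hPG.center_nontrivial
        rw [hZbot] at hcent
        rcases hcent with ⟨⟨x, hx⟩, ⟨y, hy⟩, hxy⟩
        rw [Subgroup.mem_bot] at hx hy
        exact hxy (by subst hx; subst hy; rfl)
      have hcardlt : Nat.card (P : Subgroup G) < n := by
        have h1 : Nat.card (P : Subgroup G) ∣ Nat.card G :=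
          Subgroup.card_subgroup_dvd_card _
        rcases lt_or_eq_of_le (Nat.le_of_dvd (Nat.pos_of_ne_zero hcardGne) h1) with h | h
        · omega
        · exact absurd (Subgroup.eq_top_of_card_eq _ h) hPne
      have htop := ih _ (hn ▸ hcardlt) ↥(P : Subgroup G) rfl
        (restrictAut φ (P : Subgroup G) hPinv)
        (hcop.coprime_dvd_right (Subgroup.card_subgroup_dvd_card _))
      have hle : (P : Subgroup G) ≤ H := le_of_restrict φ _ hPinv htop
      have h2 : p ^ (Nat.card G).factorization p ∣ Nat.card H := by
        rw [← P.card_eq_multiplicity]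
        exact Subgroup.card_dvd_of_le hle
      exact (Nat.Prime.pow_dvd_iff_le_factorization hp hcardHne).mp h2
    have hcardeq : Nat.card H = Nat.card G :=
      Nat.dvd_antisymm (Subgroup.card_subgroup_dvd_card H) hdvd
    exact Subgroup.eq_top_of_card_eq H hcardeq
  · -- proper nontrivial center : quotient induction
    set N := Subgroup.center G with hNdef
    have hmapN : ∀ a : A, N.map (φ a : G ≃* G).toMonoidHom = N := fun a =>
      Subgroup.characteristic_iff_map_eq.mp Subgroup.centerCharacteristic (φ a)
    have hNinv : ∀ a : A, ∀ g ∈ N, φ a g ∈ N := by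
      intro a g hg
      rw [← hmapN a]
      exact ⟨g, hg, rfl⟩
    have hcardNlt : Nat.card N < n := by
      have h1 : Nat.card N ∣ Nat.card G := Subgroup.card_subgroup_dvd_card N
      rcases lt_or_eq_of_le (Nat.le_of_dvd Nat.card_pos h1) with h | h
      · omega
      · exact absurd (Subgroup.eq_top_of_card_eq _ h) hZtop
    have hNle : N ≤ ⨆ (a : A) (_ : a ≠ 1), cg φ a := by
      apply le_of_restrict φ N hNinv
      exact ih _ (hn ▸ hcardNlt) ↥N rfl (restrictAut φ N hNinv)
        (hcop.coprime_dvd_right (Subgroup.card_subgroup_dvd_card N))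
    have hcardQlt : Nat.card (G ⧸ N) < n := by
      have h1 : Nat.card G = Nat.card (G ⧸ N) * Nat.card N :=
        Subgroup.card_eq_card_quotient_mul_card_subgroup N
      have h2 : 1 < Nat.card N := (Subgroup.one_lt_card_iff_ne_bot N).mpr hZbot
      have h3 : 0 < Nat.card (G ⧸ N) := Nat.card_pos
      rw [← hn, h1]
      nlinarith
    have hqcop : Nat.Coprime q (Nat.card (G ⧸ N)) := by
      refine hcop.coprime_dvd_right ?_
      exact ⟨Nat.card N, Subgroup.card_eq_card_quotient_mul_card_subgroup N⟩
    have htop := ih _ (hn ▸ hcardQlt) (G ⧸ N) rfl (quotAut φ N hmapN) hqcop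
    exact quotient_step hq hexp φ N hmapN hcop htop hNle

end Stmt2Aux

/-- if `A` is an elementary abelian group of order `q^2` (`q` a prime coprime to
`|G|`) acting on a finite group `G`, then `G` is generated by the centralizers `C_G(a)`,
`a ∈ A^#`. -/
theorem stmt_2 {q : ℕ} (hq : q.Prime) {A G : Type*} [CommGroup A] [Finite A]
    [Group G] [Finite G]
    (hcard : Nat.card A = q ^ 2) (hexp : ∀ a : A, a ^ q = 1)
    (φ : A →* MulAut G) (hcop : Nat.Coprime q (Nat.card G)) :
    (⨆ (a : A) (_ : a ≠ 1), fixedSubgroup (fun _ : Unit => φ a) Set.univ) = ⊤ :=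
  Stmt2Aux.key hq hcard hexp (Nat.card G) G rfl φ hcop
end

section
/- Let L be a Lie algebra, H a subalgebra of L generated by finitely many elements h_1, ..., h_m such that every Lie commutator in the generators h_i is ad-nilpotent as an operator on L. If H is nilpotent, then there exists a positive integer d such that [L, H, H, ..., H] = 0 with d copies of H. -/
/-- The iterated Lie commutators in the elements of a set `s`. -/
inductive IsLieWord {L : Type*} [LieRing L] (s : Set L) : L → Prop
  | base {x : L} : x ∈ s → IsLieWord s x
  | bracket {x y : L} : IsLieWord s x → IsLieWord s y → IsLieWord s ⁅x, y⁆

/-- `bracketChain F H n` is `[L, H, ..., H]` with `n` copies of `H`. -/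
def bracketChain {F L : Type*} [Field F] [LieRing L] [LieAlgebra F L]
    (H : LieSubalgebra F L) : ℕ → Submodule F L
  | 0 => ⊤
  | n + 1 => Submodule.span F {z : L | ∃ x ∈ bracketChain H n, ∃ y ∈ H, z = ⁅x, y⁆}

namespace Stmt9Aux

/-- Formal bracket words in `m` letters. -/
inductive FW (m : ℕ) : Type
  | leaf (i : Fin m) : FW m
  | node (a b : FW m) : FW m

namespace FW

variable {m : ℕ}

/-- weight (number of leaves) -/
def wt : FW m → ℕ
  | leaf _ => 1
  | node a b => wt a + wt b

theorem one_le_wt (w : FW m) : 1 ≤ wt w := by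
  induction w with
  | leaf i => simp [wt]
  | node a b ha hb => simp [wt]; omega

variable {L : Type*} [LieRing L]

/-- evaluation of a formal word -/
def ev (h : Fin m → L) : FW m → L
  | leaf i => h i
  | node a b => ⁅ev h a, ev h b⁆

theorem isLieWord_ev (h : Fin m → L) (w : FW m) : IsLieWord (Set.range h) (ev h w) := by
  induction w with
  | leaf i => exact IsLieWord.base ⟨i, rfl⟩
  | node a b ha hb => exact IsLieWord.bracket ha hb

/-- encoding into ℕ, used to build a linear order -/
def enc : FW m → ℕ
  | leaf i => Nat.pair 0 i
  | node a b => Nat.pair 1 (Nat.pair (enc a) (enc b))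

theorem enc_injective : Function.Injective (enc (m := m)) := by
  intro a
  induction a with
  | leaf i =>
    intro b hb
    cases b with
    | leaf j =>
      simp only [enc, Nat.pair_eq_pair] at hb
      exact congrArg leaf (Fin.ext (by exact_mod_cast hb.2))
    | node c d => simp [enc, Nat.pair_eq_pair] at hb
  | node a b iha ihb =>
    intro c hc
    cases c with
    | leaf j => simp [enc, Nat.pair_eq_pair] at hc
    | node c d =>
      simp only [enc, Nat.pair_eq_pair, true_and, and_true] at hc
      rw [iha hc.1, ihb hc.2]

/-- A linear order on formal words in which weight is monotone. -/
noncomputable instance : LinearOrder (FW m) :=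
  LinearOrder.lift' (fun w => toLex ((wt w, enc w) : ℕ ×ₗ ℕ))
    (fun a b hab => by
      have h2 : ((wt a, enc a) : ℕ × ℕ) = (wt b, enc b) := hab
      exact enc_injective (congrArg Prod.snd h2))

theorem lt_of_wt_lt {a b : FW m} (h : wt a < wt b) : a < b := by
  change toLex ((wt a, enc a) : ℕ ×ₗ ℕ) < toLex ((wt b, enc b) : ℕ ×ₗ ℕ)
  exact Prod.Lex.left _ _ h

theorem finite_wt_le (m : ℕ) : ∀ c : ℕ, {w : FW m | wt w ≤ c}.Finite := by
  intro c
  induction c with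
  | zero =>
    convert Set.finite_empty
    ext w
    simpa using fun hw => absurd (one_le_wt w) (by omega)
  | succ n ih =>
    have hsub : {w : FW m | wt w ≤ n + 1} ⊆
        (Set.range (leaf : Fin m → FW m)) ∪
          (Set.image2 node {w : FW m | wt w ≤ n} {w : FW m | wt w ≤ n}) := by
      rintro w hw
      cases w with
      | leaf i => exact Or.inl ⟨i, rfl⟩
      | node a b =>
        refine Or.inr ⟨a, ?_, b, ?_, rfl⟩ <;>
        · simp only [Set.mem_setOf_eq, wt] at hw ⊢
          have := one_le_wt a; have := one_le_wt b; omega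
    exact Set.Finite.subset ((Set.finite_range _).union (Set.Finite.image2 _ ih ih)) hsub

end FW

open FW

/-! ### Lower central series bracket lemma and vanishing of long words -/

theorem lcs_lie_lcs {F K : Type*} [Field F] [LieRing K] [LieAlgebra F K] :
    ∀ (b a : ℕ) (x y : K), x ∈ LieModule.lowerCentralSeries F K K a →
      y ∈ LieModule.lowerCentralSeries F K K b →
      ⁅x, y⁆ ∈ LieModule.lowerCentralSeries F K K (a + b + 1) := by
  intro b
  induction b with
  | zero =>
    intro a x y hx _
    rw [LieModule.lowerCentralSeries_succ, ← lie_skew]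
    exact neg_mem (LieSubmodule.lie_mem_lie (LieSubmodule.mem_top y) hx)
  | succ n ih =>
    intro a x y hx hy
    rw [LieModule.lowerCentralSeries_succ] at hy
    have hy' : y ∈ Submodule.span F
        { z : K | ∃ u ∈ (⊤ : LieIdeal F K), ∃ v ∈ LieModule.lowerCentralSeries F K K n,
          ⁅u, v⁆ = z } := by
      rw [← LieSubmodule.lieIdeal_oper_eq_linear_span']
      exact hy
    refine Submodule.span_induction
      (p := fun z _ => ⁅x, z⁆ ∈ LieModule.lowerCentralSeries F K K (a + (n + 1) + 1))
      ?_ ?_ ?_ ?_ hy'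
    · rintro z ⟨u, -, v, hv, rfl⟩
      rw [leibniz_lie]
      refine add_mem ?_ ?_
      · have h1 : ⁅x, u⁆ ∈ LieModule.lowerCentralSeries F K K (a + 1) := by
          rw [LieModule.lowerCentralSeries_succ, ← lie_skew]
          exact neg_mem (LieSubmodule.lie_mem_lie (LieSubmodule.mem_top u) hx)
        exact (by omega : a + 1 + n + 1 = a + (n + 1) + 1) ▸ ih (a + 1) _ _ h1 hv
      · have h2 : ⁅x, v⁆ ∈ LieModule.lowerCentralSeries F K K (a + n + 1) := ih a _ _ hx hv
        have h3 : ⁅u, ⁅x, v⁆⁆ ∈ LieModule.lowerCentralSeries F K K (a + n + 1 + 1) := by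
          rw [LieModule.lowerCentralSeries_succ]
          exact LieSubmodule.lie_mem_lie (LieSubmodule.mem_top u) h2
        exact (by omega : a + n + 1 + 1 = a + (n + 1) + 1) ▸ h3
    · simp
    · intro z₁ z₂ _ _ h1 h2
      rw [lie_add]; exact add_mem h1 h2
    · intro t z _ hz
      rw [lie_smul]; exact Submodule.smul_mem _ t hz

variable {F L : Type*} [Field F] [LieRing L] [LieAlgebra F L] {m : ℕ}

theorem exists_bound (h : Fin m → L) (H : LieSubalgebra F L)
    (hgen : H = LieSubalgebra.lieSpan F L (Set.range h))
    (hnilp : LieRing.IsNilpotent H) :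
    ∃ c : ℕ, 1 ≤ c ∧ ∀ w : FW m, c < wt w → ev h w = 0 := by
  have hmem : ∀ w : FW m, ev h w ∈ H := by
    intro w
    rw [hgen]
    induction w with
    | leaf i => exact LieSubalgebra.subset_lieSpan ⟨i, rfl⟩
    | node a b iha ihb => exact LieSubalgebra.lie_mem _ iha ihb
  have key : ∀ (w : FW m) (n : ℕ), wt w = n + 1 →
      (⟨ev h w, hmem w⟩ : H) ∈ LieModule.lowerCentralSeries F H H n := by
    intro w
    induction w with
    | leaf i =>
      intro n hn
      simp only [wt] at hn
      obtain rfl : n = 0 := by omega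
      simp
    | node a b iha ihb =>
      intro n hn
      obtain ⟨p, hp⟩ : ∃ p, wt a = p + 1 := ⟨wt a - 1, by have := one_le_wt a; omega⟩
      obtain ⟨q, hq⟩ : ∃ q, wt b = q + 1 := ⟨wt b - 1, by have := one_le_wt b; omega⟩
      have hab : (⟨ev h (FW.node a b), hmem _⟩ : H)
          = ⁅(⟨ev h a, hmem a⟩ : H), (⟨ev h b, hmem b⟩ : H)⁆ := rfl
      rw [hab]
      have hwt : p + q + 1 = n := by simp only [wt] at hn; omega
      exact hwt ▸ lcs_lie_lcs q p _ _ (iha p hp) (ihb q hq)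
  obtain ⟨k, hk⟩ := (LieModule.isNilpotent_iff F H H).mp hnilp
  refine ⟨k + 1, by omega, fun w hw => ?_⟩
  obtain ⟨n, hn⟩ : ∃ n, wt w = n + 1 := ⟨wt w - 1, by have := one_le_wt w; omega⟩
  have h1 := key w n hn
  have h2 := LieModule.antitone_lowerCentralSeries F H H (by omega : k ≤ n) h1
  rw [hk, LieSubmodule.mem_bot] at h2
  exact congrArg Subtype.val h2

/-! ### Operators -/

variable (F) in
/-- adjoint operator of a word -/
noncomputable def φ (h : Fin m → L) (w : FW m) : Module.End F L :=
  LieAlgebra.ad F L (ev h w)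

variable (F) in
/-- product of adjoint operators along a list of words -/
noncomputable def prodT (h : Fin m → L) (l : List (FW m)) : Module.End F L :=
  (l.map (φ F h)).prod

/-- total weight of a list of words -/
def totalWt (l : List (FW m)) : ℕ := (l.map wt).sum

attribute [local instance 100] LieRing.ofAssociativeRing

theorem φ_node (h : Fin m → L) (a b : FW m) :
    φ F h (FW.node a b) = φ F h a * φ F h b - φ F h b * φ F h a := by
  have : φ F h (FW.node a b) = ⁅φ F h a, φ F h b⁆ := by
    simp only [φ, ev]
    exact LieHom.map_lie _ _ _
  rw [this, Ring.lie_def]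

theorem prodT_cons (h : Fin m → L) (w : FW m) (l : List (FW m)) :
    prodT F h (w :: l) = φ F h w * prodT F h l := by
  simp [prodT]

/-- The insertion lemma: multiplying a sorted product by a letter on the left lands in the
span of sorted products of the same total weight, whose letters dominate a letter of the input. -/
theorem insert_mem_span (h : Fin m → L) :
    ∀ (s : List (FW m)) (w : FW m), s.Pairwise (· ≤ ·) →
    prodT F h (w :: s) ∈ Submodule.span F (prodT F h '' {t : List (FW m) |
      t.Pairwise (· ≤ ·) ∧ totalWt t = wt w + totalWt s ∧ ∀ u ∈ t, ∃ v ∈ w :: s, v ≤ u}) := by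
  intro s
  induction s with
  | nil =>
    intro w _
    refine Submodule.subset_span ⟨[w], ⟨List.pairwise_singleton _ w, by simp [totalWt], ?_⟩, rfl⟩
    intro u hu
    rw [List.mem_singleton] at hu
    exact ⟨w, List.mem_cons_self, hu ▸ le_refl w⟩
  | cons v s' ih =>
    intro w hs
    have hs' : s'.Pairwise (· ≤ ·) := hs.of_cons
    have hvs' : ∀ x ∈ s', v ≤ x := fun x hx => (List.pairwise_cons.mp hs).1 x hx
    by_cases hwv : w ≤ v
    · refine Submodule.subset_span ⟨w :: v :: s', ⟨?_, rfl, ?_⟩, rfl⟩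
      · rw [List.pairwise_cons]
        refine ⟨?_, hs⟩
        intro b hb
        rcases List.mem_cons.mp hb with rfl | hb
        · exact hwv
        · exact le_trans hwv (hvs' b hb)
      · exact fun u hu => ⟨u, hu, le_refl u⟩
    · have hvw : v < w := lt_of_not_ge hwv
      have expand : prodT F h (w :: v :: s')
          = φ F h v * prodT F h (w :: s') + prodT F h (FW.node w v :: s') := by
        rw [prodT_cons, prodT_cons, prodT_cons, prodT_cons, φ_node]
        noncomm_ring
      rw [expand]
      refine Submodule.add_mem _ ?_ ?_
      · -- term A
        have hA := ih w hs'
        have hmap := Submodule.apply_mem_span_image_of_mem_span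
          (LinearMap.mulLeft F (φ F h v)) hA
        refine Submodule.span_le.mpr ?_ hmap
        rintro _ ⟨_, ⟨t, ⟨hts, htw, htb⟩, rfl⟩, rfl⟩
        have : LinearMap.mulLeft F (φ F h v) (prodT F h t) = prodT F h (v :: t) := by
          simp [prodT_cons, LinearMap.mulLeft_apply]
        rw [this]
        refine Submodule.subset_span ⟨v :: t, ⟨?_, ?_, ?_⟩, rfl⟩
        · rw [List.pairwise_cons]
          refine ⟨?_, hts⟩
          intro b hb
          obtain ⟨u, hu, huu⟩ := htb b hb
          rcases List.mem_cons.mp hu with rfl | hu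
          · exact le_trans (le_of_lt hvw) huu
          · exact le_trans (hvs' u hu) huu
        · simp only [totalWt, List.map_cons, List.sum_cons] at htw ⊢
          omega
        · intro u hu
          rcases List.mem_cons.mp hu with rfl | hu
          · exact ⟨u, List.mem_cons_of_mem _ (List.mem_cons_self), le_refl u⟩
          · obtain ⟨x, hx, hxu⟩ := htb u hu
            rcases List.mem_cons.mp hx with rfl | hx
            · exact ⟨x, List.mem_cons_self, hxu⟩
            · exact ⟨x, List.mem_cons_of_mem _ (List.mem_cons_of_mem _ hx), hxu⟩
      · -- term B
        have hB := ih (FW.node w v) hs'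
        refine Submodule.span_le.mpr ?_ hB
        rintro _ ⟨t, ⟨hts, htw, htb⟩, rfl⟩
        refine Submodule.subset_span ⟨t, ⟨hts, ?_, ?_⟩, rfl⟩
        · simp only [totalWt, List.map_cons, List.sum_cons, wt] at htw ⊢
          omega
        · intro u hu
          obtain ⟨x, hx, hxu⟩ := htb u hu
          rcases List.mem_cons.mp hx with rfl | hx
          · refine ⟨v, List.mem_cons_of_mem _ (List.mem_cons_self), ?_⟩
            refine le_trans (le_of_lt (lt_of_wt_lt ?_)) hxu
            simp only [wt]
            have := one_le_wt w
            omega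
          · exact ⟨x, List.mem_cons_of_mem _ (List.mem_cons_of_mem _ hx), hxu⟩

/-- Straightening: every product is in the span of sorted products of the same total weight. -/
theorem straighten (h : Fin m → L) (l : List (FW m)) :
    prodT F h l ∈ Submodule.span F
      (prodT F h '' {t : List (FW m) | t.Pairwise (· ≤ ·) ∧ totalWt t = totalWt l}) := by
  induction l with
  | nil => exact Submodule.subset_span ⟨[], ⟨List.Pairwise.nil, rfl⟩, rfl⟩
  | cons w l ih =>
    have hmap := Submodule.apply_mem_span_image_of_mem_span
      (LinearMap.mulLeft F (φ F h w)) ih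
    refine Submodule.span_le.mpr ?_ hmap
    rintro _ ⟨_, ⟨t, ⟨hts, htw⟩, rfl⟩, rfl⟩
    have heq : LinearMap.mulLeft F (φ F h w) (prodT F h t) = prodT F h (w :: t) := by
      simp [prodT_cons, LinearMap.mulLeft_apply]
    rw [heq]
    refine Submodule.span_le.mpr ?_ (insert_mem_span h t w hts)
    rintro _ ⟨t', ⟨ht's, ht'w, -⟩, rfl⟩
    refine Submodule.subset_span ⟨t', ⟨ht's, ?_⟩, rfl⟩
    simp only [totalWt, List.map_cons, List.sum_cons]
    simp only [totalWt] at ht'w htw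
    omega

/-! ### Sorted lists: contiguity of repeated entries -/

theorem sorted_prefix_replicate {α : Type*} [LinearOrder α] (w : α) :
    ∀ l : List α, l.Pairwise (· ≤ ·) → (∀ x ∈ l, w ≤ x) →
      ∃ q, l = List.replicate (l.count w) w ++ q := by
  intro l
  induction l with
  | nil => exact fun _ _ => ⟨[], by simp⟩
  | cons a t ih =>
    intro hs hge
    rcases eq_or_ne a w with rfl | hne
    · obtain ⟨q, hq⟩ := ih hs.of_cons (fun x hx => hge x (List.mem_cons_of_mem _ hx))
      refine ⟨q, ?_⟩
      rw [List.count_cons_self, List.replicate_succ]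
      simpa using hq
    · have hcount : (a :: t).count w = 0 := by
        rw [List.count_eq_zero]
        intro hwmem
        rcases List.mem_cons.mp hwmem with heq | hwt
        · exact hne heq.symm
        · have h1 : a ≤ w := (List.pairwise_cons.mp hs).1 w hwt
          have h2 : w ≤ a := hge a (List.mem_cons_self)
          exact hne (le_antisymm h1 h2)
      exact ⟨a :: t, by rw [hcount]; rfl⟩

theorem sorted_infix_replicate {α : Type*} [LinearOrder α] (w : α) :
    ∀ l : List α, l.Pairwise (· ≤ ·) → ∃ p q, l = p ++ List.replicate (l.count w) w ++ q := by
  intro l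
  induction l with
  | nil => exact fun _ => ⟨[], [], by simp⟩
  | cons a t ih =>
    intro hs
    rcases eq_or_ne a w with rfl | hne
    · have hge : ∀ x ∈ a :: t, a ≤ x := by
        intro x hx
        rcases List.mem_cons.mp hx with rfl | hx
        · exact le_refl x
        · exact (List.pairwise_cons.mp hs).1 x hx
      obtain ⟨q, hq⟩ := sorted_prefix_replicate a (a :: t) hs hge
      exact ⟨[], q, by rw [List.nil_append]; exact hq⟩
    · obtain ⟨p, q, hpq⟩ := ih hs.of_cons
      refine ⟨a :: p, q, ?_⟩
      rw [List.count_cons_of_ne hne]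
      conv_lhs => rw [hpq]
      simp only [List.cons_append]

/-! ### The vanishing theorem for long products -/

theorem prodT_eq_zero (h : Fin m → L) (c N : ℕ) (hc1 : 1 ≤ c)
    (hc : ∀ w : FW m, c < wt w → ev h w = 0)
    (hN : ∀ w : FW m, wt w ≤ c → φ F h w ^ N = 0)
    (l : List (FW m))
    (hl : c * ((N - 1) * (FW.finite_wt_le m c).toFinset.card + 1) ≤ totalWt l) :
    prodT F h l = 0 := by
  classical
  set k := (FW.finite_wt_le m c).toFinset.card with hk
  have hall : ∀ t : List (FW m), t.Pairwise (· ≤ ·) → totalWt t = totalWt l →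
      prodT F h t = 0 := by
    intro t hts htw
    by_cases hbig : ∃ u ∈ t, c < wt u
    · obtain ⟨u, hu, hcu⟩ := hbig
      have hzero : φ F h u = 0 := by
        simp [φ, hc u hcu]
      refine List.prod_eq_zero ?_
      rw [← hzero]
      exact List.mem_map_of_mem hu
    · push_neg at hbig
      -- all letters have weight ≤ c
      have hlen : (N - 1) * k + 1 ≤ t.length := by
        have hsum : totalWt t ≤ t.length * c := by
          have := List.sum_le_card_nsmul (t.map wt) c (by
            intro x hx
            obtain ⟨u, hu, rfl⟩ := List.mem_map.mp hx
            exact hbig u hu)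
          simpa [totalWt, smul_eq_mul] using this
        have : c * ((N - 1) * k + 1) ≤ t.length * c := le_trans (htw ▸ hl) hsum
        have := (mul_comm c ((N - 1) * k + 1)) ▸ this
        exact Nat.le_of_mul_le_mul_right this (by omega)
      -- pigeonhole: some word occurs at least N times
      obtain ⟨w, hwmem, hwcount⟩ : ∃ w ∈ t, N ≤ t.count w := by
        by_contra hcon
        push_neg at hcon
        have hsum : t.toFinset.sum (fun w => t.count w) = t.length := by
          have h0 := Multiset.toFinset_sum_count_eq (↑t : Multiset (FW m))
          set_option linter.unnecessarySimpa false in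
          simpa using h0
        have hsub : t.toFinset ⊆ (FW.finite_wt_le m c).toFinset := by
          intro w hw
          rw [List.mem_toFinset] at hw
          rw [Set.Finite.mem_toFinset]
          exact hbig w hw
        have hle : t.toFinset.sum (fun w => t.count w) ≤ t.toFinset.card * (N - 1) := by
          refine Finset.sum_le_card_nsmul _ _ _ ?_
          intro x hx
          rw [List.mem_toFinset] at hx
          have := hcon x hx
          omega
        have hcard : t.toFinset.card ≤ k := Finset.card_le_card hsub
        have : t.length ≤ k * (N - 1) := by
          calc t.length = t.toFinset.sum (fun w => t.count w) := hsum.symm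
            _ ≤ t.toFinset.card * (N - 1) := hle
            _ ≤ k * (N - 1) := Nat.mul_le_mul_right _ hcard
        nlinarith [hlen, this]
      obtain ⟨p, q, hpq⟩ := sorted_infix_replicate w t hts
      have hsplit : t = p ++ (List.replicate N w ++ List.replicate (t.count w - N) w) ++ q := by
        rw [← List.replicate_add]
        rw [(by omega : N + (t.count w - N) = t.count w)]
        exact hpq
      have hNw : φ F h w ^ N = 0 := hN w (hbig w hwmem)
      rw [hsplit]
      simp only [prodT, List.map_append, List.prod_append, List.map_replicate,
        List.prod_replicate, hNw, zero_mul, mul_zero]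
  have hspan := straighten (F := F) h l
  have hsub : (prodT F h '' {t : List (FW m) | t.Pairwise (· ≤ ·) ∧ totalWt t = totalWt l})
      ⊆ (⊥ : Submodule F (Module.End F L)) := by
    rintro _ ⟨t, ⟨hts, htw⟩, rfl⟩
    simp [hall t hts htw]
  have := Submodule.span_le.mpr hsub hspan
  simpa using this

/-! ### Relating `bracketChain` to products of word operators -/

variable (F) in
/-- elements obtained by applying a length-`n` product of word operators -/
def chainSet (h : Fin m → L) (n : ℕ) : Set L :=
  {z : L | ∃ (x : L) (l : List (FW m)), l.length = n ∧ z = prodT F h l x}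

theorem mem_span_range_ev (h : Fin m → L) (H : LieSubalgebra F L)
    (hgen : H = LieSubalgebra.lieSpan F L (Set.range h)) {y : L} (hy : y ∈ H) :
    y ∈ Submodule.span F (Set.range (ev h)) := by
  set p : Submodule F L := Submodule.span F (Set.range (ev h)) with hp
  have hlie : ∀ x ∈ p, ∀ y ∈ p, ⁅x, y⁆ ∈ p := by
    intro x hx
    refine Submodule.span_induction (p := fun x _ => ∀ y ∈ p, ⁅x, y⁆ ∈ p) ?_ ?_ ?_ ?_ hx
    · rintro _ ⟨a, rfl⟩ y hy
      refine Submodule.span_induction (p := fun y _ => ⁅ev h a, y⁆ ∈ p) ?_ ?_ ?_ ?_ hy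
      · rintro _ ⟨b, rfl⟩
        exact Submodule.subset_span ⟨FW.node a b, rfl⟩
      · simp
      · intro y₁ y₂ _ _ h1 h2; rw [lie_add]; exact add_mem h1 h2
      · intro t y _ h1; rw [lie_smul]; exact Submodule.smul_mem _ t h1
    · intro y _; simp
    · intro x₁ x₂ _ _ h1 h2 y hy; rw [add_lie]; exact add_mem (h1 y hy) (h2 y hy)
    · intro t x _ h1 y hy; rw [smul_lie]; exact Submodule.smul_mem _ t (h1 y hy)
  let K : LieSubalgebra F L :=
    { p with lie_mem' := fun {x y} hx hy => hlie x hx y hy }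
  have hHK : H ≤ K := by
    rw [hgen]
    apply LieSubalgebra.lieSpan_le.mpr
    rintro _ ⟨i, rfl⟩
    exact Submodule.subset_span ⟨FW.leaf i, rfl⟩
  exact hHK hy

theorem bracketChain_le_span (h : Fin m → L) (H : LieSubalgebra F L)
    (hgen : H = LieSubalgebra.lieSpan F L (Set.range h)) :
    ∀ n : ℕ, bracketChain H n ≤ Submodule.span F (chainSet F h n) := by
  intro n
  induction n with
  | zero =>
    intro x _
    exact Submodule.subset_span ⟨x, [], rfl, by simp [prodT]⟩
  | succ n ih =>
    show Submodule.span F _ ≤ _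
    refine Submodule.span_le.mpr ?_
    rintro _ ⟨x, hx, y, hy, rfl⟩
    have hx' : x ∈ Submodule.span F (chainSet F h n) := ih hx
    have hy' : y ∈ Submodule.span F (Set.range (ev h)) := mem_span_range_ev h H hgen hy
    refine Submodule.span_induction
      (p := fun y _ => ⁅x, y⁆ ∈ Submodule.span F (chainSet F h (n + 1))) ?_ ?_ ?_ ?_ hy'
    · rintro _ ⟨w, rfl⟩
      have hmap := Submodule.apply_mem_span_image_of_mem_span (φ F h w) hx'
      have himg : (φ F h w) '' (chainSet F h n) ⊆ chainSet F h (n + 1) := by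
        rintro _ ⟨_, ⟨x', l, hl, rfl⟩, rfl⟩
        exact ⟨x', w :: l, by simp [hl], by simp [prodT_cons]⟩
      have h1 : (φ F h w) x ∈ Submodule.span F (chainSet F h (n + 1)) :=
        Submodule.span_le.mpr (le_trans (Set.image_subset_iff.mpr
          (fun a ha => Set.mem_preimage.mpr (himg ⟨a, ha, rfl⟩))) Submodule.subset_span) hmap
      have hlie : ⁅x, ev h w⁆ = -((φ F h w) x) := by
        simp only [φ, LieAlgebra.ad_apply]
        rw [← lie_skew]
      rw [hlie]
      exact neg_mem h1
    · simp
    · intro y₁ y₂ _ _ h1 h2; rw [lie_add]; exact add_mem h1 h2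
    · intro t y _ h1; rw [lie_smul]; exact Submodule.smul_mem _ t h1

end Stmt9Aux

/-- if `H = ⟨h₁, …, h_m⟩` is a subalgebra of a Lie algebra `L` such that every
Lie commutator in the generators `h_i` is ad-nilpotent on `L`, and `H` is nilpotent, then
`[L, H, …, H] = 0` for some number `d` of copies of `H`. -/
theorem stmt_9 {F L : Type*} [Field F] [LieRing L] [LieAlgebra F L]
    (m : ℕ) (h : Fin m → L) (H : LieSubalgebra F L)
    (hgen : H = LieSubalgebra.lieSpan F L (Set.range h))
    (had : ∀ x : L, IsLieWord (Set.range h) x → ∃ n : ℕ, (LieAlgebra.ad F L x) ^ n = 0)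
    (hnilp : LieRing.IsNilpotent H) :
    ∃ d : ℕ, 0 < d ∧ bracketChain H d = ⊥ := by
  classical
  open Stmt9Aux in
  obtain ⟨c, hc1, hc⟩ := Stmt9Aux.exists_bound h H hgen hnilp
  set Sct := (Stmt9Aux.FW.finite_wt_le m c).toFinset with hSct
  set k := Sct.card with hk
  -- a uniform nilpotency exponent
  have hex : ∀ w : Stmt9Aux.FW m, ∃ n : ℕ, Stmt9Aux.φ F h w ^ n = 0 := fun w =>
    had _ (Stmt9Aux.FW.isLieWord_ev h w)
  set N : ℕ := Sct.sup (fun w => Nat.find (hex w)) + 1 with hN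
  have hNpow : ∀ w : Stmt9Aux.FW m, Stmt9Aux.FW.wt w ≤ c → Stmt9Aux.φ F h w ^ N = 0 := by
    intro w hw
    have hwS : w ∈ Sct := by rw [hSct, Set.Finite.mem_toFinset]; exact hw
    have hfind : Nat.find (hex w) ≤ N := by
      have h2 := Finset.le_sup (f := fun w => Nat.find (hex w)) hwS
      have h3 : Nat.find (hex w) ≤ Sct.sup (fun w => Nat.find (hex w)) := h2
      omega
    have hfw : Stmt9Aux.φ F h w ^ (Nat.find (hex w)) = 0 := Nat.find_spec (hex w)
    calc Stmt9Aux.φ F h w ^ N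
        = Stmt9Aux.φ F h w ^ (Nat.find (hex w)) * Stmt9Aux.φ F h w ^ (N - Nat.find (hex w)) := by
          rw [← pow_add]; congr 1; omega
      _ = 0 := by rw [hfw, zero_mul]
  set d : ℕ := c * ((N - 1) * k + 1) with hd
  refine ⟨d, by positivity, ?_⟩
  rw [eq_bot_iff]
  refine le_trans (Stmt9Aux.bracketChain_le_span h H hgen d) ?_
  refine Submodule.span_le.mpr ?_
  rintro _ ⟨x, l, hl, rfl⟩
  have hwt : d ≤ Stmt9Aux.totalWt l := by
    have h1 : l.length ≤ Stmt9Aux.totalWt l := by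
      have h0 : (l.map Stmt9Aux.FW.wt).length ≤ (l.map Stmt9Aux.FW.wt).sum :=
        List.length_le_sum_of_one_le _ (by
          intro i hi
          obtain ⟨u, _, rfl⟩ := List.mem_map.mp hi
          exact Stmt9Aux.FW.one_le_wt u)
      simpa [Stmt9Aux.totalWt] using h0
    omega
  have hzero : Stmt9Aux.prodT F h l = 0 :=
    Stmt9Aux.prodT_eq_zero h c N hc1 hc hNpow l hwt
  simp [hzero]
end
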